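/- arXiv:1505.02838 — 2 statements merged into one kernel-verified Lean document; each statement's English description precedes it below -/
import Mathlib

section
/- Let G be a finite simple graph with at least one edge. If the independence complex Ind(G) is shellable and H = K_m is a complete graph (m ≥ 1), then the independence complex Ind(G[K_m]) of the lexicographical product G[K_m] is shellable. -/
open Finset

variable {V : Type*}

/-- A facet of a collection of faces `Δ` is a maximal face. -/
def IsFacet (Δ : Set (Finset V)) (F : Finset V) : Prop :=
  F ∈ Δ ∧ ∀ G ∈ Δ, F ⊆ G → F = G

/-- A complex is pure if all facets have the same cardinality. -/
def IsPure (Δ : Set (Finset V)) : Prop :=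
  ∀ F G, IsFacet Δ F → IsFacet Δ G → F.card = G.card

/-- Deletion of a vertex from a complex. -/
def del (Δ : Set (Finset V)) (x : V) : Set (Finset V) := {F ∈ Δ | x ∉ F}

/-- Link of a vertex in a complex. -/
def link [DecidableEq V] (Δ : Set (Finset V)) (x : V) : Set (Finset V) :=
  {F ∈ Δ | x ∉ F ∧ insert x F ∈ Δ}

/-- `F : Fin s → Finset V` is a shelling order of the facets of `Δ`. -/
def IsShelling [DecidableEq V] (Δ : Set (Finset V)) {s : ℕ} (F : Fin s → Finset V) : Prop :=
  (∀ i, IsFacet Δ (F i)) ∧ (∀ G, IsFacet Δ G → ∃ i, F i = G) ∧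
  Function.Injective F ∧
  (∀ i j : Fin s, j < i → ∃ x ∈ F i \ F j, ∃ k, k < i ∧ F i \ F k = {x})

/-- A complex is shellable if it is pure and admits a shelling order of its facets. -/
def Shellable [DecidableEq V] (Δ : Set (Finset V)) : Prop :=
  IsPure Δ ∧ ∃ (s : ℕ) (F : Fin s → Finset V), IsShelling Δ F

/-- A pure complex is vertex decomposable if it is a simplex (unique facet), or some vertex
has pure, vertex decomposable deletion and link. -/
inductive VertexDecomposable [DecidableEq V] : Set (Finset V) → Prop
  | simplex (Δ : Set (Finset V)) (h : ∃! F, IsFacet Δ F) : VertexDecomposable Δ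
  | step (Δ : Set (Finset V)) (x : V)
      (hdp : IsPure (del Δ x)) (hlp : IsPure (link Δ x))
      (hd : VertexDecomposable (del Δ x)) (hl : VertexDecomposable (link Δ x)) :
      VertexDecomposable Δ

/-- The independence complex of a graph: all independent sets. -/
def indComplex (G : SimpleGraph V) : Set (Finset V) :=
  {F | ∀ v ∈ F, ∀ w ∈ F, ¬ G.Adj v w}

/-- The lexicographical product `G[H]`. -/
def lexProd {α β : Type*} (G : SimpleGraph α) (H : SimpleGraph β) :
    SimpleGraph (α × β) where
  Adj p q := G.Adj p.1 q.1 ∨ (p.1 = q.1 ∧ H.Adj p.2 q.2)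
  symm := by
    constructor
    rintro p q (h | ⟨h1, h2⟩)
    · exact Or.inl h.symm
    · exact Or.inr ⟨h1.symm, h2.symm⟩
  loopless := by
    constructor
    rintro p (h | ⟨_, h⟩)
    · exact G.loopless.irrefl _ h
    · exact H.loopless.irrefl _ h

/-- The independence number of a graph. -/
noncomputable def indepNum (G : SimpleGraph V) : ℕ :=
  sSup {n | ∃ F : Finset V, F ∈ indComplex G ∧ F.card = n}

/-- The expansion of a graph `G`, where vertex `v` is replaced by `s v` copies,
and distinct vertices `(i,j)` and `(k,l)` are adjacent iff `i ~ k` in `G` or `i = k`. -/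
def expansion (G : SimpleGraph V) (s : V → ℕ) : SimpleGraph (Σ v : V, Fin (s v)) where
  Adj p q := p ≠ q ∧ (G.Adj p.1 q.1 ∨ p.1 = q.1)
  symm := by
    constructor
    rintro p q ⟨h1, h2 | h2⟩
    · exact ⟨h1.symm, Or.inl h2.symm⟩
    · exact ⟨h1.symm, Or.inr h2.symm⟩
  loopless := by constructor; rintro p ⟨h, _⟩; exact h rfl

/-- The circulant graph `C_n(S)`: vertices `x_a`, `x_b` are adjacent iff
`|a-b| ∈ S` or `n - |a-b| ∈ S`. -/
def circulant (n : ℕ) (S : Set ℕ) : SimpleGraph (Fin n) where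
  Adj a b := a ≠ b ∧ ((max a.val b.val - min a.val b.val) ∈ S ∨
      (n - (max a.val b.val - min a.val b.val)) ∈ S)
  symm := by
    constructor
    rintro a b ⟨h1, h2⟩
    refine ⟨h1.symm, ?_⟩
    rwa [max_comm, min_comm]
  loopless := by constructor; rintro a ⟨h, _⟩; exact h rfl


section Helpers

variable {α : Type*} [DecidableEq α]

lemma lexProd_adj {β : Type*} (G : SimpleGraph α) (H : SimpleGraph β) (p q : α × β) :
    (lexProd G H).Adj p q ↔ G.Adj p.1 q.1 ∨ (p.1 = q.1 ∧ H.Adj p.2 q.2) := Iff.rfl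

lemma mem_indComplex_iff (G : SimpleGraph α) (S : Finset α) :
    S ∈ indComplex G ↔ ∀ v ∈ S, ∀ w ∈ S, ¬ G.Adj v w := Iff.rfl

lemma mem_indComplex_lexProd (G : SimpleGraph α) {m : ℕ} (S : Finset (α × Fin m)) :
    S ∈ indComplex (lexProd G (⊤ : SimpleGraph (Fin m))) ↔
      (S.image Prod.fst ∈ indComplex G ∧ ∀ p ∈ S, ∀ q ∈ S, p.1 = q.1 → p = q) := by
  simp only [mem_indComplex_iff]
  constructor
  · intro h
    refine ⟨?_, ?_⟩
    · intro v hv w hw hadj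
      obtain ⟨p, hp, rfl⟩ := Finset.mem_image.mp hv
      obtain ⟨q, hq, rfl⟩ := Finset.mem_image.mp hw
      exact h p hp q hq (Or.inl hadj)
    · intro p hp q hq h1
      by_contra hne
      have h2 : p.2 ≠ q.2 := fun h2 => hne (Prod.ext h1 h2)
      exact h p hp q hq (Or.inr ⟨h1, by simpa using h2⟩)
  · rintro ⟨h1, h2⟩ p hp q hq hadj
    rw [lexProd_adj] at hadj
    rcases hadj with hadj | ⟨hfst, hsnd⟩
    · exact h1 p.1 (Finset.mem_image_of_mem _ hp) q.1 (Finset.mem_image_of_mem _ hq) hadj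
    · have hne : p.2 ≠ q.2 := by simpa using hsnd
      exact hne (congrArg Prod.snd (h2 p hp q hq hfst))

end Helpers

theorem stmt3 {α : Type*} [Fintype α] [DecidableEq α] (G : SimpleGraph α)
    (hG : ∃ v w, G.Adj v w) (m : ℕ) (hm : 1 ≤ m)
    (hsh : Shellable (indComplex G)) :
    Shellable (indComplex (lexProd G (⊤ : SimpleGraph (Fin m)))) := by
  classical
  obtain ⟨hpure, s, F, hfac, hsurj, hinj, hshell⟩ := hsh
  -- a facet of `indComplex G` exists
  obtain ⟨S0, hS0mem, hS0max⟩ := Set.Finite.exists_maximalFor id (indComplex G)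
    (Set.toFinite _) ⟨∅, fun v hv => absurd hv (Finset.notMem_empty v)⟩
  have hS0 : IsFacet (indComplex G) S0 := ⟨hS0mem, fun T hT hsub => le_antisymm hsub (hS0max hT hsub)⟩
  obtain ⟨i0, hi0⟩ := hsurj S0 hS0
  have hs : 0 < s := i0.pos
  set c : ℕ := (F i0).card with hcdef
  have hc : ∀ i, (F i).card = c := fun i => hpure _ _ (hfac i) (hfac i0)
  -- an enumeration of each facet
  set e : (i : Fin s) → Fin c ≃ {x // x ∈ F i} :=
    fun i => ((F i).equivFin.trans (finCongr (hc i))).symm with hedef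
  -- the lifted facets
  set Gs : Fin s → (Fin c → Fin m) → Finset (α × Fin m) :=
    fun i φ => Finset.univ.image (fun t => (((e i t : α), φ t) : α × Fin m)) with hGsdef
  have hmemGs : ∀ i φ (p : α × Fin m), p ∈ Gs i φ ↔ ∃ t, (((e i t : α), φ t) : α × Fin m) = p := by
    intro i φ p
    simp [hGsdef]
  have hein : ∀ i, Function.Injective (fun t => (e i t : α)) := by
    intro i t t' h
    exact (e i).injective (Subtype.ext h)
  have hfst : ∀ i φ, (Gs i φ).image Prod.fst = F i := by
    intro i φ
    ext v
    constructor
    · intro hv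
      obtain ⟨p, hp, rfl⟩ := Finset.mem_image.mp hv
      obtain ⟨t, ht⟩ := (hmemGs i φ p).mp hp
      rw [← ht]
      exact (e i t).2
    · intro hv
      refine Finset.mem_image.mpr ⟨((e i ((e i).symm ⟨v, hv⟩) : α), φ ((e i).symm ⟨v, hv⟩)), ?_, ?_⟩
      · exact (hmemGs i φ _).mpr ⟨_, rfl⟩
      · simp
  have hGsmem : ∀ i φ, Gs i φ ∈ indComplex (lexProd G (⊤ : SimpleGraph (Fin m))) := by
    intro i φ
    rw [mem_indComplex_lexProd, hfst]
    refine ⟨(hfac i).1, ?_⟩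
    intro p hp q hq h1
    obtain ⟨t, ht⟩ := (hmemGs i φ p).mp hp
    obtain ⟨t', ht'⟩ := (hmemGs i φ q).mp hq
    have htt : t = t' := by
      apply hein i
      rw [← ht, ← ht'] at h1
      exact h1
    rw [← ht, ← ht', htt]
  have hGsfacet : ∀ i φ, IsFacet (indComplex (lexProd G (⊤ : SimpleGraph (Fin m)))) (Gs i φ) := by
    intro i φ
    refine ⟨hGsmem i φ, ?_⟩
    intro S' hS' hsub
    obtain ⟨hS'img, hS'fib⟩ := (mem_indComplex_lexProd G S').mp hS'
    have himgsub : F i ⊆ S'.image Prod.fst := by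
      rw [← hfst i φ]
      exact Finset.image_subset_image hsub
    have himgeq : F i = S'.image Prod.fst := (hfac i).2 _ hS'img himgsub
    apply Finset.Subset.antisymm hsub
    intro p hp
    have hp1 : p.1 ∈ F i := by
      rw [himgeq]
      exact Finset.mem_image_of_mem _ hp
    have het : ((e i ((e i).symm ⟨p.1, hp1⟩) : α)) = p.1 := by simp
    have hin : (((e i ((e i).symm ⟨p.1, hp1⟩) : α), φ ((e i).symm ⟨p.1, hp1⟩)) : α × Fin m) ∈ S' :=
      hsub ((hmemGs i φ _).mpr ⟨_, rfl⟩)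
    have heq := hS'fib _ hin p hp het
    rw [← heq]
    exact (hmemGs i φ _).mpr ⟨_, rfl⟩
  have hGscard : ∀ i φ, (Gs i φ).card = c := by
    intro i φ
    rw [hGsdef]
    rw [Finset.card_image_of_injective _
      (fun t t' (h : ((e _ t : α), _) = _) => hein i (congrArg Prod.fst h))]
    simp
  have hGsinj : ∀ i φ j ψ, Gs i φ = Gs j ψ → i = j ∧ φ = ψ := by
    intro i φ j ψ h
    have hij : i = j := by
      apply hinj
      rw [← hfst i φ, ← hfst j ψ, h]
    subst hij
    refine ⟨rfl, funext fun t => ?_⟩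
    have hmem : (((e i t : α), φ t) : α × Fin m) ∈ Gs i ψ := by
      rw [← h]; exact (hmemGs i φ _).mpr ⟨t, rfl⟩
    obtain ⟨t', ht'⟩ := (hmemGs i ψ _).mp hmem
    have htt : t' = t := hein i (congrArg Prod.fst ht')
    subst htt
    exact (congrArg Prod.snd ht').symm
  -- every facet of the lifted complex is some `Gs i φ`
  have hGssurj : ∀ S', IsFacet (indComplex (lexProd G (⊤ : SimpleGraph (Fin m)))) S' →
      ∃ i φ, Gs i φ = S' := by
    intro S' hS'
    obtain ⟨hS'img, hS'fib⟩ := (mem_indComplex_lexProd G S').mp hS'.1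
    -- the image is a facet of `indComplex G`
    have himgfacet : IsFacet (indComplex G) (S'.image Prod.fst) := by
      refine ⟨hS'img, ?_⟩
      intro T hT hsub
      set S'' : Finset (α × Fin m) :=
        S' ∪ (T \ S'.image Prod.fst).image (fun v => ((v, ⟨0, hm⟩) : α × Fin m)) with hS''def
      have hS''img : S''.image Prod.fst = T := by
        apply Finset.Subset.antisymm
        · intro v hv
          obtain ⟨p, hp, rfl⟩ := Finset.mem_image.mp hv
          rcases Finset.mem_union.mp hp with h | h
          · exact hsub (Finset.mem_image_of_mem _ h)
          · obtain ⟨w, hw, rfl⟩ := Finset.mem_image.mp h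
            exact (Finset.mem_sdiff.mp hw).1
        · intro v hv
          by_cases hvi : v ∈ S'.image Prod.fst
          · obtain ⟨p, hp, rfl⟩ := Finset.mem_image.mp hvi
            exact Finset.mem_image_of_mem _ (Finset.mem_union_left _ hp)
          · have hmem : ((v, ⟨0, hm⟩) : α × Fin m) ∈ S'' := by
              rw [hS''def]
              exact Finset.mem_union_right _
                (Finset.mem_image_of_mem _ (Finset.mem_sdiff.mpr ⟨hv, hvi⟩))
            exact Finset.mem_image_of_mem Prod.fst hmem
      have hS''mem : S'' ∈ indComplex (lexProd G (⊤ : SimpleGraph (Fin m))) := by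
        rw [mem_indComplex_lexProd, hS''img]
        refine ⟨hT, ?_⟩
        intro p hp q hq hpq
        rcases Finset.mem_union.mp hp with hp' | hp' <;>
          rcases Finset.mem_union.mp hq with hq' | hq'
        · exact hS'fib p hp' q hq' hpq
        · obtain ⟨w, hw, rfl⟩ := Finset.mem_image.mp hq'
          have hmemi := Finset.mem_image_of_mem Prod.fst hp'
          rw [hpq] at hmemi
          exact absurd hmemi (Finset.mem_sdiff.mp hw).2
        · obtain ⟨w, hw, rfl⟩ := Finset.mem_image.mp hp'
          have hmemi := Finset.mem_image_of_mem Prod.fst hq'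
          rw [← hpq] at hmemi
          exact absurd hmemi (Finset.mem_sdiff.mp hw).2
        · obtain ⟨w, hw, rfl⟩ := Finset.mem_image.mp hp'
          obtain ⟨w', hw', rfl⟩ := Finset.mem_image.mp hq'
          exact Prod.ext hpq rfl
      have hSeq : S' = S'' := hS'.2 S'' hS''mem Finset.subset_union_left
      rw [hSeq, hS''img]
    obtain ⟨j, hj⟩ := hsurj _ himgfacet
    have hex : ∀ t : Fin c, ∃ p : α × Fin m, p ∈ S' ∧ p.1 = (e j t : α) := by
      intro t
      have : (e j t : α) ∈ S'.image Prod.fst := by rw [← hj]; exact (e j t).2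
      obtain ⟨p, hp, hp1⟩ := Finset.mem_image.mp this
      exact ⟨p, hp, hp1⟩
    choose p hp1 hp2 using hex
    refine ⟨j, fun t => (p t).2, ?_⟩
    apply Finset.Subset.antisymm
    · intro q hq
      obtain ⟨t, ht⟩ := (hmemGs j _ q).mp hq
      have heta : (((e j t : α), (p t).2) : α × Fin m) = p t := Prod.ext (hp2 t).symm rfl
      rw [← ht, heta]
      exact hp1 t
    · intro q hq
      have hq1 : q.1 ∈ F j := by rw [hj]; exact Finset.mem_image_of_mem _ hq
      have het : ((e j ((e j).symm ⟨q.1, hq1⟩) : α)) = q.1 := by simp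
      have hpq : p ((e j).symm ⟨q.1, hq1⟩) = q :=
        hS'fib _ (hp1 _) q hq (by rw [hp2 _, het])
      refine (hmemGs j _ q).mpr ⟨(e j).symm ⟨q.1, hq1⟩, ?_⟩
      exact Prod.ext het ((Prod.ext_iff.mp hpq).2)
  have hpure' : IsPure (indComplex (lexProd G (⊤ : SimpleGraph (Fin m)))) := by
    intro A B hA hB
    obtain ⟨i, φ, rfl⟩ := hGssurj A hA
    obtain ⟨j, ψ, rfl⟩ := hGssurj B hB
    rw [hGscard, hGscard]
  letI : LinearOrder (Lex (Fin c → Fin m)) :=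
    @linearOrderOfSTO _ (· < ·)
      { trichotomous := (Pi.isTrichotomous_lex _ _ IsWellFounded.wf).1 } (Classical.decRel _)
  letI : Fintype (Lex (Fin c → Fin m)) := inferInstanceAs (Fintype (Fin c → Fin m))
  letI : Fintype (Lex (Fin s × Lex (Fin c → Fin m))) :=
    inferInstanceAs (Fintype (Fin s × Lex (Fin c → Fin m)))
  set q : Fin (Fintype.card (Lex (Fin s × Lex (Fin c → Fin m)))) ≃o
      Lex (Fin s × Lex (Fin c → Fin m)) := monoEquivOfFin _ rfl with hqdef
  refine ⟨hpure', Fintype.card (Lex (Fin s × Lex (Fin c → Fin m))),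
    fun n => Gs (ofLex (q n)).1 (ofLex (ofLex (q n)).2), fun n => hGsfacet _ _, ?_, ?_, ?_⟩
  · -- surjectivity onto facets
    intro S' hS'
    obtain ⟨i, φ, rfl⟩ := hGssurj S' hS'
    refine ⟨q.symm (toLex (i, toLex φ)), ?_⟩
    show Gs (ofLex (q (q.symm (toLex (i, toLex φ))))).1
      (ofLex (ofLex (q (q.symm (toLex (i, toLex φ))))).2) = Gs i φ
    rw [OrderIso.apply_symm_apply]
    rfl
  · -- injectivity
    intro n1 n2 h
    obtain ⟨h1, h2⟩ := hGsinj _ _ _ _ h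
    apply q.injective
    have : ofLex (q n1) = ofLex (q n2) := Prod.ext h1 (ofLex.injective h2)
    exact toLex.injective this
  · -- the shelling condition
    intro n1 n2 hlt
    show ∃ x ∈ Gs (ofLex (q n1)).1 (ofLex (ofLex (q n1)).2) \
        Gs (ofLex (q n2)).1 (ofLex (ofLex (q n2)).2),
      ∃ k, k < n1 ∧ Gs (ofLex (q n1)).1 (ofLex (ofLex (q n1)).2) \
        Gs (ofLex (q k)).1 (ofLex (ofLex (q k)).2) = {x}
    rcases hq1 : ofLex (q n1) with ⟨i, φL⟩
    rcases hq2 : ofLex (q n2) with ⟨j, ψL⟩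
    set φ : Fin c → Fin m := ofLex φL with hφdef
    set ψ : Fin c → Fin m := ofLex ψL with hψdef
    have hqn1 : q n1 = toLex (i, φL) := by rw [← hq1]; rfl
    have hqlt : q n2 < q n1 := q.lt_iff_lt.mpr hlt
    have hlex : j < i ∨ j = i ∧ ψL < φL := by
      have := Prod.Lex.lt_iff.mp hqlt
      rw [hq1, hq2] at this
      exact this
    rcases hlex with hji | ⟨hji, hlex2⟩
    · -- case 1 : the underlying facets differ
      obtain ⟨x, hx, k, hk, hkdiff⟩ := hshell i j hji
      have hxFi : x ∈ F i := (Finset.mem_sdiff.mp hx).1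
      have hxFj : x ∉ F j := (Finset.mem_sdiff.mp hx).2
      have hxFk : x ∉ F k := by
        have hxmem : x ∈ F i \ F k := by rw [hkdiff]; exact Finset.mem_singleton_self x
        exact (Finset.mem_sdiff.mp hxmem).2
      have het0 : ((e i ((e i).symm ⟨x, hxFi⟩) : α)) = x := by simp
      set t0 : Fin c := (e i).symm ⟨x, hxFi⟩ with ht0def
      set ψ' : Fin c → Fin m := fun t =>
        if h : ((e k t : α)) ∈ F i then φ ((e i).symm ⟨(e k t : α), h⟩) else ⟨0, hm⟩ with hψ'def
      refine ⟨((x, φ t0) : α × Fin m), ?_, q.symm (toLex (k, toLex ψ')), ?_, ?_⟩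
      · rw [Finset.mem_sdiff]
        constructor
        · exact (hmemGs i φ _).mpr ⟨t0, by rw [het0]⟩
        · intro hmem
          obtain ⟨t, ht⟩ := (hmemGs j ψ _).mp hmem
          apply hxFj
          have h1 : ((e j t : α)) = x := congrArg Prod.fst ht
          rw [← h1]
          exact (e j t).2
      · have hXlt : (toLex ((k, toLex ψ') : Fin s × Lex (Fin c → Fin m))) < q n1 := by
          rw [hqn1]
          exact Prod.Lex.lt_iff.mpr (Or.inl hk)
        have h2 := q.symm.lt_iff_lt.mpr hXlt
        rwa [OrderIso.symm_apply_apply] at h2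
      · rw [OrderIso.apply_symm_apply]
        show Gs i φ \ Gs k ψ' = {((x, φ t0) : α × Fin m)}
        apply Finset.Subset.antisymm
        · intro p hp
          rw [Finset.mem_sdiff] at hp
          obtain ⟨hp1, hp2⟩ := hp
          obtain ⟨t, ht⟩ := (hmemGs i φ p).mp hp1
          rw [Finset.mem_singleton]
          by_cases hteq : ((e i t : α)) = x
          · have htt0 : t = t0 := by
              rw [ht0def]
              exact ((e i).eq_symm_apply).mpr (Subtype.ext hteq)
            rw [← ht, htt0, het0]
          · exfalso
            have hFk : ((e i t : α)) ∈ F k := by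
              by_contra hno
              have hmem2 : ((e i t : α)) ∈ F i \ F k := Finset.mem_sdiff.mpr ⟨(e i t).2, hno⟩
              rw [hkdiff, Finset.mem_singleton] at hmem2
              exact hteq hmem2
            apply hp2
            have het' : ((e k ((e k).symm ⟨(e i t : α), hFk⟩) : α)) = (e i t : α) := by simp
            set t' : Fin c := (e k).symm ⟨(e i t : α), hFk⟩ with ht'def
            refine (hmemGs k ψ' _).mpr ⟨t', ?_⟩
            have hcond : ((e k t' : α)) ∈ F i := by rw [het']; exact (e i t).2
            have hψ't' : ψ' t' = φ t := by
              rw [hψ'def]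
              dsimp only
              rw [dif_pos hcond]
              congr 1
              exact ((e i).symm_apply_eq).mpr (Subtype.ext het')
            rw [← ht]
            exact Prod.ext het' hψ't'
        · intro p hp
          rw [Finset.mem_singleton] at hp
          subst hp
          rw [Finset.mem_sdiff]
          refine ⟨(hmemGs i φ _).mpr ⟨t0, by rw [het0]⟩, ?_⟩
          intro hmem
          obtain ⟨t, ht⟩ := (hmemGs k ψ' _).mp hmem
          apply hxFk
          have h1 : ((e k t : α)) = x := congrArg Prod.fst ht
          rw [← h1]
          exact (e k t).2
    · -- case 2 : same underlying facet, colourings differ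
      subst hji
      have hlexpi : ∃ t0 : Fin c, (∀ t, t < t0 → ψ t = φ t) ∧ ψ t0 < φ t0 := hlex2
      obtain ⟨t0, hbelow, ht0lt⟩ := hlexpi
      set ψ' : Fin c → Fin m := Function.update φ t0 (ψ t0) with hψ'def
      have hψ'lt : (toLex ψ' : Lex (Fin c → Fin m)) < φL := by
        show ∃ t1 : Fin c, (∀ t, t < t1 → ψ' t = φ t) ∧ ψ' t1 < φ t1
        refine ⟨t0, fun t htl => ?_, ?_⟩
        · rw [hψ'def]
          exact Function.update_of_ne (ne_of_lt htl) _ _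
        · rw [hψ'def]
          rw [Function.update_self]
          exact ht0lt
      refine ⟨(((e j t0 : α), φ t0) : α × Fin m), ?_, q.symm (toLex (j, toLex ψ')), ?_, ?_⟩
      · rw [Finset.mem_sdiff]
        refine ⟨(hmemGs j φ _).mpr ⟨t0, rfl⟩, ?_⟩
        intro hmem
        obtain ⟨t, ht⟩ := (hmemGs j ψ _).mp hmem
        have h1 : ((e j t : α)) = (e j t0 : α) := congrArg Prod.fst ht
        have htt0 : t = t0 := hein j h1
        subst htt0
        have h2 : ψ t = φ t := congrArg Prod.snd ht
        exact (ne_of_lt ht0lt) h2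
      · have hXlt : (toLex ((j, toLex ψ') : Fin s × Lex (Fin c → Fin m))) < q n1 := by
          rw [hqn1]
          exact Prod.Lex.lt_iff.mpr (Or.inr ⟨rfl, hψ'lt⟩)
        have h2 := q.symm.lt_iff_lt.mpr hXlt
        rwa [OrderIso.symm_apply_apply] at h2
      · rw [OrderIso.apply_symm_apply]
        show Gs j φ \ Gs j ψ' = {(((e j t0 : α), φ t0) : α × Fin m)}
        apply Finset.Subset.antisymm
        · intro p hp
          rw [Finset.mem_sdiff] at hp
          obtain ⟨hp1, hp2⟩ := hp
          obtain ⟨t, ht⟩ := (hmemGs j φ p).mp hp1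
          rw [Finset.mem_singleton]
          by_cases hteq : t = t0
          · rw [← ht, hteq]
          · exfalso
            apply hp2
            refine (hmemGs j ψ' _).mpr ⟨t, ?_⟩
            rw [← ht]
            refine Prod.ext rfl ?_
            show ψ' t = φ t
            rw [hψ'def]
            exact Function.update_of_ne hteq _ _
        · intro p hp
          rw [Finset.mem_singleton] at hp
          subst hp
          rw [Finset.mem_sdiff]
          refine ⟨(hmemGs j φ _).mpr ⟨t0, rfl⟩, ?_⟩
          intro hmem
          obtain ⟨t, ht⟩ := (hmemGs j ψ' _).mp hmem
          have h1 : ((e j t : α)) = (e j t0 : α) := congrArg Prod.fst ht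
          have htt0 : t = t0 := hein j h1
          subst htt0
          have h2 : ψ' t = φ t := congrArg Prod.snd ht
          rw [hψ'def, Function.update_self] at h2
          exact (ne_of_lt ht0lt) h2
end

section
/- Let G and H be finite simple graphs. Then the lexicographical product G[H] is well-covered (every maximal independent set of G[H] has the same cardinality) if and only if both G and H are well-covered. -/
open Finset

variable {V : Type*}

section aux

lemma empty_mem_indComplex {V : Type*} (G : SimpleGraph V) : (∅ : Finset V) ∈ indComplex G := by
  intro v hv; simp at hv

lemma exists_facet_above {V : Type*} [Fintype V] {Δ : Set (Finset V)} {F₀ : Finset V}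
    (h₀ : F₀ ∈ Δ) : ∃ F, IsFacet Δ F ∧ F₀ ⊆ F := by
  have hfin : {F | F ∈ Δ ∧ F₀ ⊆ F}.Finite := Set.toFinite _
  obtain ⟨F, hF, hmax⟩ := Set.Finite.exists_maximalFor Finset.card _ hfin ⟨F₀, h₀, subset_rfl⟩
  refine ⟨F, ⟨hF.1, ?_⟩, hF.2⟩
  intro K hK hFK
  exact Finset.eq_of_subset_of_card_le hFK
    (hmax ⟨hK, hF.2.trans hFK⟩ (Finset.card_le_card hFK))

lemma facet_nonempty {V : Type*} [Nonempty V] {G : SimpleGraph V} {F : Finset V}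
    (hF : IsFacet (indComplex G) F) : F.Nonempty := by
  rcases F.eq_empty_or_nonempty with h | h
  · exfalso
    obtain ⟨x⟩ := ‹Nonempty V›
    have hx : ({x} : Finset V) ∈ indComplex G := by
      intro v hv w hw
      rw [Finset.mem_singleton] at hv hw
      subst hv; subst hw; exact G.loopless.irrefl _
    have h2 := hF.2 {x} hx (by simp [h])
    rw [h] at h2
    exact Finset.singleton_ne_empty x h2.symm
  · exact h

lemma prod_mem_indComplex {α β : Type*} {G : SimpleGraph α} {H : SimpleGraph β}
    {A : Finset α} {B : Finset β} (hA : A ∈ indComplex G) (hB : B ∈ indComplex H) :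
    A ×ˢ B ∈ indComplex (lexProd G H) := by
  intro p hp q hq hadj
  rw [Finset.mem_product] at hp hq
  rcases hadj with h | ⟨h1, h2⟩
  · exact hA _ hp.1 _ hq.1 h
  · exact hB _ hp.2 _ hq.2 h2

lemma prod_facet {α β : Type*} [Nonempty β] {G : SimpleGraph α} {H : SimpleGraph β}
    {A : Finset α} {B : Finset β}
    (hA : IsFacet (indComplex G) A) (hB : IsFacet (indComplex H) B) :
    IsFacet (indComplex (lexProd G H)) (A ×ˢ B) := by
  classical
  refine ⟨prod_mem_indComplex hA.1 hB.1, ?_⟩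
  intro S hS hsub
  refine Finset.Subset.antisymm hsub fun p hp => ?_
  obtain ⟨b₀, hb₀⟩ := facet_nonempty hB
  have hA1 : p.1 ∈ A := by
    have hins : insert p.1 A ∈ indComplex G := by
      intro v hv w hw hvw
      rcases Finset.mem_insert.mp hv with rfl | hv
      · rcases Finset.mem_insert.mp hw with rfl | hw
        · exact G.loopless.irrefl _ hvw
        · exact hS p hp (w, b₀) (hsub (Finset.mem_product.mpr ⟨hw, hb₀⟩)) (Or.inl hvw)
      · rcases Finset.mem_insert.mp hw with rfl | hw
        · exact hS (v, b₀) (hsub (Finset.mem_product.mpr ⟨hv, hb₀⟩)) p hp (Or.inl hvw)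
        · exact hA.1 v hv w hw hvw
    have heq := hA.2 _ hins (Finset.subset_insert _ _)
    have h2 := Finset.mem_insert_self p.1 A
    rwa [← heq] at h2
  have hB1 : p.2 ∈ B := by
    have hins : insert p.2 B ∈ indComplex H := by
      intro v hv w hw hvw
      rcases Finset.mem_insert.mp hv with rfl | hv
      · rcases Finset.mem_insert.mp hw with rfl | hw
        · exact H.loopless.irrefl _ hvw
        · exact hS p hp (p.1, w) (hsub (Finset.mem_product.mpr ⟨hA1, hw⟩))
            (Or.inr ⟨rfl, hvw⟩)
      · rcases Finset.mem_insert.mp hw with rfl | hw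
        · exact hS (p.1, v) (hsub (Finset.mem_product.mpr ⟨hA1, hv⟩)) p hp
            (Or.inr ⟨rfl, hvw⟩)
        · exact hB.1 v hv w hw hvw
    have heq := hB.2 _ hins (Finset.subset_insert _ _)
    have h2 := Finset.mem_insert_self p.2 B
    rwa [← heq] at h2
  exact Finset.mem_product.mpr ⟨hA1, hB1⟩

lemma facet_proj {α β : Type*} [Nonempty β] [DecidableEq α] [DecidableEq β]
    {G : SimpleGraph α} {H : SimpleGraph β} {S : Finset (α × β)}
    (hS : IsFacet (indComplex (lexProd G H)) S) :
    IsFacet (indComplex G) (S.image Prod.fst) ∧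
    ∀ a ∈ S.image Prod.fst,
      IsFacet (indComplex H) ((S.filter (fun p => p.1 = a)).image Prod.snd) := by
  have hAind : S.image Prod.fst ∈ indComplex G := by
    intro v hv w hw hvw
    obtain ⟨p, hp, rfl⟩ := Finset.mem_image.mp hv
    obtain ⟨q, hq, rfl⟩ := Finset.mem_image.mp hw
    exact hS.1 p hp q hq (Or.inl hvw)
  constructor
  · refine ⟨hAind, ?_⟩
    intro C hC hsub
    refine Finset.Subset.antisymm hsub fun a' ha' => ?_
    by_contra ha'n
    obtain ⟨b₀⟩ := ‹Nonempty β›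
    have hins : insert (a', b₀) S ∈ indComplex (lexProd G H) := by
      intro v hv w hw hvw
      rcases Finset.mem_insert.mp hv with rfl | hv
      · rcases Finset.mem_insert.mp hw with rfl | hw
        · exact (lexProd G H).loopless.irrefl _ hvw
        · rcases hvw with h | ⟨h1, h2⟩
          · exact hC _ ha' _ (hsub (Finset.mem_image_of_mem Prod.fst hw)) h
          · have hm := Finset.mem_image_of_mem Prod.fst hw
            rw [← h1] at hm
            exact ha'n hm
      · rcases Finset.mem_insert.mp hw with rfl | hw
        · rcases hvw with h | ⟨h1, h2⟩
          · exact hC _ (hsub (Finset.mem_image_of_mem Prod.fst hv)) _ ha' h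
          · have hm := Finset.mem_image_of_mem Prod.fst hv
            rw [h1] at hm
            exact ha'n hm
        · exact hS.1 v hv w hw hvw
    have heq := hS.2 _ hins (Finset.subset_insert _ _)
    have h2 := Finset.mem_insert_self (a', b₀) S
    rw [← heq] at h2
    exact ha'n (Finset.mem_image_of_mem Prod.fst h2)
  · intro a ha
    have hBind : (S.filter (fun p => p.1 = a)).image Prod.snd ∈ indComplex H := by
      intro v hv w hw hvw
      obtain ⟨p, hp, rfl⟩ := Finset.mem_image.mp hv
      obtain ⟨q, hq, rfl⟩ := Finset.mem_image.mp hw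
      obtain ⟨hpS, hpa⟩ := Finset.mem_filter.mp hp
      obtain ⟨hqS, hqa⟩ := Finset.mem_filter.mp hq
      exact hS.1 p hpS q hqS (Or.inr ⟨hpa.trans hqa.symm, hvw⟩)
    refine ⟨hBind, ?_⟩
    intro C hC hsub
    refine Finset.Subset.antisymm hsub fun b' hb' => ?_
    by_contra hb'n
    have habS : (a, b') ∉ S := by
      intro hm
      exact hb'n (Finset.mem_image.mpr ⟨(a, b'), Finset.mem_filter.mpr ⟨hm, rfl⟩, rfl⟩)
    have hins : insert (a, b') S ∈ indComplex (lexProd G H) := by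
      intro v hv w hw hvw
      rcases Finset.mem_insert.mp hv with rfl | hv
      · rcases Finset.mem_insert.mp hw with rfl | hw
        · exact (lexProd G H).loopless.irrefl _ hvw
        · rcases hvw with h | ⟨h1, h2⟩
          · exact hAind _ ha _ (Finset.mem_image_of_mem Prod.fst hw) h
          · have : w.2 ∈ C := hsub (Finset.mem_image.mpr
              ⟨w, Finset.mem_filter.mpr ⟨hw, h1.symm⟩, rfl⟩)
            exact hC _ hb' _ this h2
      · rcases Finset.mem_insert.mp hw with rfl | hw
        · rcases hvw with h | ⟨h1, h2⟩
          · exact hAind _ (Finset.mem_image_of_mem Prod.fst hv) _ ha h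
          · have : v.2 ∈ C := hsub (Finset.mem_image.mpr
              ⟨v, Finset.mem_filter.mpr ⟨hv, h1⟩, rfl⟩)
            exact hC _ this _ hb' h2
        · exact hS.1 v hv w hw hvw
    have heq := hS.2 _ hins (Finset.subset_insert _ _)
    have h2 := Finset.mem_insert_self (a, b') S
    rw [← heq] at h2
    exact habS h2

lemma facet_card_eq {α β : Type*} [Fintype α] [Fintype β] [Nonempty β]
    [DecidableEq α] [DecidableEq β]
    {G : SimpleGraph α} {H : SimpleGraph β} {S : Finset (α × β)}
    (hG : IsPure (indComplex G)) (hH : IsPure (indComplex H))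
    {A₀ : Finset α} (hA₀ : IsFacet (indComplex G) A₀)
    {B₀ : Finset β} (hB₀ : IsFacet (indComplex H) B₀)
    (hS : IsFacet (indComplex (lexProd G H)) S) :
    S.card = A₀.card * B₀.card := by
  obtain ⟨hA, hfib⟩ := facet_proj hS
  have hsum : S.card = ∑ a ∈ S.image Prod.fst, (S.filter (fun p => p.1 = a)).card :=
    Finset.card_eq_sum_card_fiberwise fun p hp => Finset.mem_image_of_mem Prod.fst hp
  have hfibcard : ∀ a ∈ S.image Prod.fst,
      (S.filter (fun p => p.1 = a)).card = B₀.card := by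
    intro a ha
    have hinj : Set.InjOn Prod.snd ((S.filter (fun p => p.1 = a) : Finset (α × β)) : Set (α × β)) := by
      intro p hp q hq hpq
      simp only [Finset.coe_filter, Set.mem_setOf_eq] at hp hq
      exact Prod.ext (hp.2.trans hq.2.symm) hpq
    rw [← Finset.card_image_of_injOn hinj]
    exact hH _ _ (hfib a ha) hB₀
  calc S.card = ∑ a ∈ S.image Prod.fst, B₀.card := by
        rw [hsum]; exact Finset.sum_congr rfl hfibcard
    _ = (S.image Prod.fst).card * B₀.card := by rw [Finset.sum_const, smul_eq_mul]
    _ = A₀.card * B₀.card := by rw [hG _ _ hA hA₀]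

end aux

theorem stmt6 {α β : Type*} [Fintype α] [Fintype β] [Nonempty α] [Nonempty β]
    (G : SimpleGraph α) (H : SimpleGraph β) :
    IsPure (indComplex (lexProd G H)) ↔
      IsPure (indComplex G) ∧ IsPure (indComplex H) := by
  classical
  obtain ⟨A₀, hA₀, -⟩ := exists_facet_above (empty_mem_indComplex G)
  obtain ⟨B₀, hB₀, -⟩ := exists_facet_above (empty_mem_indComplex H)
  constructor
  · intro hpure
    constructor
    · intro F F' hF hF'
      have h := hpure _ _ (prod_facet hF hB₀) (prod_facet hF' hB₀)
      rw [Finset.card_product, Finset.card_product] at h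
      exact Nat.eq_of_mul_eq_mul_right (Finset.card_pos.mpr (facet_nonempty hB₀)) h
    · intro F F' hF hF'
      have h := hpure _ _ (prod_facet hA₀ hF) (prod_facet hA₀ hF')
      rw [Finset.card_product, Finset.card_product] at h
      exact Nat.eq_of_mul_eq_mul_left (Finset.card_pos.mpr (facet_nonempty hA₀)) h
  · rintro ⟨hG, hH⟩ S T hS hT
    rw [facet_card_eq hG hH hA₀ hB₀ hS, facet_card_eq hG hH hA₀ hB₀ hT]
end
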